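/- Let n ≥ 1, let k be a field, let k⟨X⟩ be the free associative algebra over k on x_1,…,x_n, and let I be the two-sided ideal generated by { x_{σ(1)}⋯x_{σ(n)} − x_1⋯x_n : σ ∈ Sym_n }. Then the images in k⟨X⟩/I of the elements x_1^{m_1}·x_ε·x_2^{m_2}⋯x_n^{m_n}, as (m_1,…,m_n) ranges over ℕ^n, are k-linearly independent, where x_ε = x_1x_2⋯x_n. -/

import Mathlib

/-- The monomial of `k⟨X⟩` corresponding to a word `w` in the generators. -/
noncomputable def wordElem (k : Type) [Field k] {n : ℕ} (w : List (Fin n)) :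
    FreeAlgebra k (Fin n) :=
  (w.map (FreeAlgebra.ι k)).prod

/-- The monomial `x_ε = x_1 x_2 ⋯ x_n` of `k⟨X⟩`. -/
noncomputable def epsElem (k : Type) [Field k] (n : ℕ) : FreeAlgebra k (Fin n) :=
  wordElem k (List.ofFn fun i : Fin n => i)

/-- The set `{ x_{σ(1)} ⋯ x_{σ(n)} − x_1 ⋯ x_n : σ ∈ Sym_n }`. -/
noncomputable def relSet (k : Type) [Field k] (n : ℕ) : Set (FreeAlgebra k (Fin n)) :=
  { p | ∃ σ : Equiv.Perm (Fin n),
      p = wordElem k (List.ofFn fun i => σ i) - epsElem k n }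

/-- The defining relations, as a binary relation on `k⟨X⟩` (`RingQuot` of this relation is
the quotient of `k⟨X⟩` by the two-sided ideal generated by the corresponding differences). -/
def algRel (k : Type) [Field k] (n : ℕ) :
    FreeAlgebra k (Fin n) → FreeAlgebra k (Fin n) → Prop :=
  fun a b => ∃ σ : Equiv.Perm (Fin n),
    a = wordElem k (List.ofFn fun i => σ i) ∧ b = epsElem k n

/-- The word `x_1^{m_1} · x_ε · x_2^{m_2} ⋯ x_n^{m_n}` as a list of generators. -/
def normalList (n : ℕ) (h : 0 < n) (m : Fin n → ℕ) : List (Fin n) :=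
  List.replicate (m ⟨0, h⟩) ⟨0, h⟩ ++ List.ofFn (fun i : Fin n => i) ++
    ((List.finRange n).drop 1).flatMap fun i => List.replicate (m i) i

/-- The images in `k⟨X⟩/I` of the elements `x_1^{m_1} · x_ε · x_2^{m_2} ⋯ x_n^{m_n}`,
`(m_1, …, m_n) ∈ ℕ^n`, are `k`-linearly independent. -/
noncomputable def toPoly (k : Type) [Field k] (n : ℕ) :
    FreeAlgebra k (Fin n) →ₐ[k] MvPolynomial (Fin n) k :=
  FreeAlgebra.lift k MvPolynomial.X

/-- The count function of a list as a `Finsupp`. -/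
noncomputable def countFinsupp {n : ℕ} (l : List (Fin n)) : Fin n →₀ ℕ :=
  Finsupp.equivFunOnFinite.symm fun j => l.count j

@[simp] lemma countFinsupp_apply {n : ℕ} (l : List (Fin n)) (j : Fin n) :
    countFinsupp l j = l.count j := rfl

lemma countFinsupp_cons {n : ℕ} (a : Fin n) (l : List (Fin n)) :
    countFinsupp (a :: l) = Finsupp.single a 1 + countFinsupp l := by
  ext j
  simp [List.count_cons, Finsupp.single_apply, eq_comm (a := j) (b := a)]
  split <;> omega

lemma toPoly_wordElem (k : Type) [Field k] (n : ℕ) (l : List (Fin n)) :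
    toPoly k n (wordElem k l) = MvPolynomial.monomial (countFinsupp l) 1 := by
  induction l with
  | nil =>
      have : countFinsupp ([] : List (Fin n)) = 0 := by ext j; simp
      simp [wordElem, this, MvPolynomial.monomial_zero']
  | cons a l ih =>
      have : wordElem k (a :: l) = FreeAlgebra.ι k a * wordElem k l := by
        simp [wordElem]
      rw [this, map_mul, ih, countFinsupp_cons]
      have hX : toPoly k n (FreeAlgebra.ι k a) = MvPolynomial.X a := by
        simp [toPoly]
      rw [hX, MvPolynomial.X, MvPolynomial.monomial_mul, one_mul]

lemma count_ofFn_bij {n : ℕ} (f : Fin n → Fin n) (hf : Function.Bijective f) (j : Fin n) :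
    (List.ofFn f).count j = 1 := by
  apply List.count_eq_one_of_mem (List.nodup_ofFn.mpr hf.injective)
  rw [List.mem_ofFn]
  exact hf.surjective j

lemma toPoly_rel (k : Type) [Field k] (n : ℕ) :
    ∀ ⦃a b⦄, algRel k n a b → toPoly k n a = toPoly k n b := by
  rintro a b ⟨σ, rfl, rfl⟩
  rw [epsElem, toPoly_wordElem, toPoly_wordElem]
  have hexp : countFinsupp (List.ofFn fun i => σ i) = countFinsupp (List.ofFn fun i : Fin n => i) :=
    Finsupp.ext fun j => by
      rw [countFinsupp_apply, countFinsupp_apply, count_ofFn_bij _ σ.bijective]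
      exact (count_ofFn_bij (fun i : Fin n => i) Function.bijective_id j).symm
  rw [hexp]

lemma sum_count_replicate {n : ℕ} (m : Fin n → ℕ) (j : Fin n) (l : List (Fin n)) :
    (l.map fun i => if i = j then m i else 0).sum = l.count j * m j := by
  induction l with
  | nil => simp
  | cons a l ih =>
      simp only [List.map_cons, List.sum_cons, ih, List.count_cons]
      rcases eq_or_ne a j with rfl | h
      · simp [Nat.add_mul, Nat.add_comm]
      · simp [h, Ne.symm h]

lemma count_normalList {n : ℕ} (h : 0 < n + 1) (m : Fin (n + 1) → ℕ) (j : Fin (n + 1)) :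
    (normalList (n + 1) h m).count j = m j + 1 := by
  have hz : (⟨0, h⟩ : Fin (n + 1)) = 0 := rfl
  rw [normalList, List.count_append, List.count_append, List.count_flatMap]
  simp only [Function.comp_def, List.count_replicate, beq_iff_eq]
  have hofn : List.ofFn (fun i : Fin (n + 1) => i) = List.finRange (n + 1) := List.ofFn_id _
  rw [sum_count_replicate, hofn, List.finRange_succ]
  have hc1 : (List.finRange (n + 1)).count j = 1 :=
    List.count_eq_one_of_mem (List.nodup_finRange _) (List.mem_finRange j)
  rw [List.finRange_succ] at hc1
  simp only [List.drop_succ_cons, List.drop_zero, hz]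
  rcases eq_or_ne j 0 with rfl | hj
  · have : ((List.finRange n).map Fin.succ).count (0 : Fin (n + 1)) = 0 := by
      rw [List.count_eq_zero]
      simp only [List.mem_map, not_exists, not_and]
      intro x _ hx
      exact (Fin.succ_ne_zero x) hx
    rw [this]
    simp [List.count_cons, this]
  · have : ((0 : Fin (n+1)) :: (List.finRange n).map Fin.succ).count j
        = ((List.finRange n).map Fin.succ).count j := by
      rw [List.count_cons]
      simp [hj.symm]
    rw [this] at hc1
    rw [hc1]
    simp [hj.symm, hj]
    omega

theorem normal_monomials_linearIndependent (n : ℕ) (hn : 1 ≤ n) (k : Type) [Field k] :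
    LinearIndependent k (fun m : Fin n → ℕ =>
      RingQuot.mkAlgHom k (algRel k n) (wordElem k (normalList n hn m))) := by
  obtain ⟨n', rfl⟩ : ∃ n', n = n' + 1 := ⟨n - 1, by omega⟩
  set ψ := RingQuot.liftAlgHom (S := k) ⟨toPoly k (n' + 1), toPoly_rel k (n' + 1)⟩ with hψ
  apply LinearIndependent.of_comp ψ.toLinearMap
  have hinj : Function.Injective
      (fun m : Fin (n' + 1) → ℕ => Finsupp.equivFunOnFinite.symm fun j => m j + 1) := by
    intro a b hab
    funext j
    have := congrArg (fun f : Fin (n' + 1) →₀ ℕ => f j) hab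
    simpa using this
  have hli := ((MvPolynomial.basisMonomials (Fin (n' + 1)) k).linearIndependent).comp
    (fun m : Fin (n' + 1) → ℕ => Finsupp.equivFunOnFinite.symm fun j => m j + 1) hinj
  convert hli using 1
  funext m
  show ψ (RingQuot.mkAlgHom k (algRel k (n' + 1)) (wordElem k (normalList (n' + 1) hn m))) = _
  rw [hψ, RingQuot.liftAlgHom_mkAlgHom_apply, toPoly_wordElem]
  rw [show ⇑(MvPolynomial.basisMonomials (Fin (n' + 1)) k) = fun s => MvPolynomial.monomial s 1
    from MvPolynomial.coe_basisMonomials _ _]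
  have hexp : countFinsupp (normalList (n' + 1) hn m)
      = Finsupp.equivFunOnFinite.symm fun j => m j + 1 :=
    Finsupp.ext fun j => by simp [count_normalList]
  rw [hexp]
  rfl
  all_goals rfl
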